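/- Let Z be a convex set in a topological vector space X and let {D_α}_{α∈ℝ} be a family of relatively open convex subsets of Z such that ⋂_α D_α = ∅, ⋃_α D_α = Z, and the relative closure of D_α in Z is contained in D_β whenever α < β. Then the function f(x) := sup{α ∈ ℝ : x ∉ D_α} is a well-defined real-valued continuous quasiconvex function on Z, and for each α ∈ ℝ one has {x ∈ Z : f(x) < α} = ⋃_{β<α} D_β and {x ∈ Z : f(x) ≤ α} = ⋂_{γ>α} D_γ. -/

import Mathlib

theorem stmt_5 {X : Type*} [AddCommGroup X] [Module ℝ X] [TopologicalSpace X]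
    [IsTopologicalAddGroup X] [ContinuousSMul ℝ X]
    (Z : Set X) (hZconv : Convex ℝ Z) (D : ℝ → Set X)
    (hDZ : ∀ α, D α ⊆ Z) (hDconv : ∀ α, Convex ℝ (D α))
    (hDopen : ∀ α, ∃ U : Set X, IsOpen U ∧ D α = U ∩ Z)
    (hInter : (⋂ α, D α) = ∅) (hUnion : (⋃ α, D α) = Z)
    (hmono : ∀ α β : ℝ, α < β → closure (D α) ∩ Z ⊆ D β) :
    (∀ x ∈ Z, {α : ℝ | x ∉ D α}.Nonempty ∧ BddAbove {α : ℝ | x ∉ D α}) ∧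
    ContinuousOn (fun x => sSup {α : ℝ | x ∉ D α}) Z ∧
    QuasiconvexOn ℝ Z (fun x => sSup {α : ℝ | x ∉ D α}) ∧
    (∀ α : ℝ, {x ∈ Z | sSup {β : ℝ | x ∉ D β} < α} = ⋃ β < α, D β) ∧
    (∀ α : ℝ, {x ∈ Z | sSup {β : ℝ | x ∉ D β} ≤ α} = ⋂ γ > α, D γ) := by
  set S : X → Set ℝ := fun x => {α : ℝ | x ∉ D α} with hS
  -- monotonicity of D
  have hmono' : ∀ α β : ℝ, α < β → D α ⊆ D β := by
    intro α β hαβ x hx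
    exact hmono α β hαβ ⟨subset_closure hx, hDZ α hx⟩
  -- nonemptiness of S x for x ∈ Z
  have hne : ∀ x ∈ Z, (S x).Nonempty := by
    intro x _
    by_contra h
    rw [Set.not_nonempty_iff_eq_empty] at h
    have hall : ∀ α, x ∈ D α := fun α => not_not.1 (Set.eq_empty_iff_forall_notMem.1 h α)
    have : x ∈ ⋂ α, D α := Set.mem_iInter.2 hall
    rw [hInter] at this; exact this
  -- upper bound: if x ∈ D β then S x ⊆ Iic β
  have hub : ∀ x β, x ∈ D β → S x ⊆ Set.Iic β := by
    intro x β hxβ γ hγ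
    by_contra h
    exact hγ (hmono' β γ (lt_of_not_ge h) hxβ)
  have hbdd : ∀ x ∈ Z, BddAbove (S x) := by
    intro x hx
    obtain ⟨α₀, hα₀⟩ := Set.mem_iUnion.1 (hUnion ▸ hx : x ∈ ⋃ α, D α)
    exact ⟨α₀, fun γ hγ => hub x α₀ hα₀ hγ⟩
  -- sSup (S x) ≤ β whenever x ∈ D β and x ∈ Z
  have hsup_le : ∀ x ∈ Z, ∀ β, x ∈ D β → sSup (S x) ≤ β := by
    intro x hx β hxβ
    exact csSup_le (hne x hx) (fun γ hγ => hub x β hxβ hγ)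
  -- γ ≤ sSup (S x) whenever x ∉ D γ, x ∈ Z
  have hle_sup : ∀ x ∈ Z, ∀ γ, x ∉ D γ → γ ≤ sSup (S x) := by
    intro x hx γ hγ
    exact le_csSup (hbdd x hx) hγ
  -- characterization of f x ≤ α
  have le_iff : ∀ x ∈ Z, ∀ α : ℝ, sSup (S x) ≤ α ↔ ∀ γ > α, x ∈ D γ := by
    intro x hx α
    constructor
    · intro h γ hγ
      by_contra hxγ
      exact absurd (le_trans (hle_sup x hx γ hxγ) h) (not_le.2 hγ)
    · intro h
      refine csSup_le (hne x hx) (fun γ hγ => ?_)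
      by_contra hc
      exact hγ (h γ (lt_of_not_ge hc))
  -- characterization of f x < α
  have lt_iff : ∀ x ∈ Z, ∀ α : ℝ, sSup (S x) < α ↔ ∃ β < α, x ∈ D β := by
    intro x hx α
    constructor
    · intro h
      obtain ⟨β, h1, h2⟩ := exists_between h
      refine ⟨β, h2, ?_⟩
      by_contra hxβ
      exact absurd (hle_sup x hx β hxβ) (not_le.2 h1)
    · rintro ⟨β, hβα, hxβ⟩
      exact lt_of_le_of_lt (hsup_le x hx β hxβ) hβα
  have part4 : ∀ α : ℝ, {x ∈ Z | sSup {β : ℝ | x ∉ D β} < α} = ⋃ β < α, D β := by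
    intro α
    ext x
    simp only [Set.mem_setOf_eq, Set.mem_iUnion]
    constructor
    · rintro ⟨hxZ, hlt⟩
      obtain ⟨β, hβα, hxβ⟩ := (lt_iff x hxZ α).1 hlt
      exact ⟨β, hβα, hxβ⟩
    · rintro ⟨β, hβα, hxβ⟩
      have hxZ : x ∈ Z := hDZ β hxβ
      exact ⟨hxZ, (lt_iff x hxZ α).2 ⟨β, hβα, hxβ⟩⟩
  have part5 : ∀ α : ℝ, {x ∈ Z | sSup {β : ℝ | x ∉ D β} ≤ α} = ⋂ γ > α, D γ := by
    intro α
    ext x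
    simp only [Set.mem_setOf_eq, Set.mem_iInter]
    constructor
    · rintro ⟨hxZ, hle⟩
      exact fun γ hγ => (le_iff x hxZ α).1 hle γ hγ
    · intro h
      have hxZ : x ∈ Z := hDZ (α + 1) (h (α + 1) (by linarith))
      exact ⟨hxZ, (le_iff x hxZ α).2 h⟩
  refine ⟨fun x hx => ⟨hne x hx, hbdd x hx⟩, ?_, ?_, part4, part5⟩
  · -- continuity
    intro x hx
    rw [ContinuousWithinAt]
    refine tendsto_order.2 ⟨?_, ?_⟩
    · intro a ha
      -- a < f x : find γ > a with x ∉ D γ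
      have : ¬ (sSup (S x) ≤ a) := not_le.2 ha
      rw [le_iff x hx a] at this
      push_neg at this
      obtain ⟨γ, hγa, hxγ⟩ := this
      set γ' := (a + γ) / 2 with hγ'
      have h1 : a < γ' := by simp [hγ']; linarith
      have h2 : γ' < γ := by simp [hγ']; linarith
      have hxcl : x ∉ closure (D γ') := by
        intro hc
        exact hxγ (hmono γ' γ h2 ⟨hc, hx⟩)
      have hV : (closure (D γ'))ᶜ ∈ nhds x :=
        (isClosed_closure.isOpen_compl).mem_nhds hxcl
      filter_upwards [mem_nhdsWithin_of_mem_nhds hV, self_mem_nhdsWithin] with y hyV hyZ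
      have hyγ' : y ∉ D γ' := fun h => hyV (subset_closure h)
      exact lt_of_lt_of_le h1 (hle_sup y hyZ γ' hyγ')
    · intro a ha
      obtain ⟨β, hβa, hxβ⟩ := (lt_iff x hx a).1 ha
      obtain ⟨U, hUopen, hUeq⟩ := hDopen β
      have hxU : x ∈ U := (hUeq ▸ hxβ).1
      filter_upwards [mem_nhdsWithin_of_mem_nhds (hUopen.mem_nhds hxU),
        self_mem_nhdsWithin] with y hyU hyZ
      have hyβ : y ∈ D β := hUeq ▸ ⟨hyU, hyZ⟩
      exact lt_of_le_of_lt (hsup_le y hyZ β hyβ) hβa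
  · -- quasiconvexity
    intro r
    have := part5 r
    simp only [hS] at this ⊢
    rw [this]
    exact convex_iInter fun γ => convex_iInter fun _ => hDconv γ
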